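/- Let ζ and ζ' be jointly standard normal with correlation ρ satisfying 0 ≤ ρ < 1. Then for every t > 0, P(ζ ≥ t, ζ' ≥ t) ≤ (1+ρ) · G(t) · G((1−ρ) t / √(1−ρ²)), with G = 1 − Φ. -/

import Mathlib

open MeasureTheory ProbabilityTheory Real Set

/-- Standard normal upper tail `G(t) = 1 − Φ(t) = ∫_t^∞ (2π)^{-1/2} e^{-x²/2} dx`. -/
noncomputable def stdNormalTail (t : ℝ) : ℝ :=
  ∫ x in Set.Ioi t, (Real.sqrt (2 * Real.pi))⁻¹ * Real.exp (-x ^ 2 / 2)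

lemma stmt15_phi_eq : gaussianPDFReal 0 1 =
    fun x => (Real.sqrt (2 * Real.pi))⁻¹ * Real.exp (-x ^ 2 / 2) := by
  funext x; simp [gaussianPDFReal]

lemma stmt15_intphi :
    Integrable (fun x => (Real.sqrt (2 * Real.pi))⁻¹ * Real.exp (-x ^ 2 / 2)) := by
  rw [← stmt15_phi_eq]; exact integrable_gaussianPDFReal 0 1

lemma stmt15_phi_nonneg (x : ℝ) :
    0 ≤ (Real.sqrt (2 * Real.pi))⁻¹ * Real.exp (-x ^ 2 / 2) := by positivity

lemma stmt15_tail_eq_Ici (u : ℝ) : stdNormalTail u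
    = ∫ x in Ici u, (Real.sqrt (2 * Real.pi))⁻¹ * Real.exp (-x ^ 2 / 2) :=
  (MeasureTheory.integral_Ici_eq_integral_Ioi).symm

lemma stmt15_tail_nonneg (u : ℝ) : 0 ≤ stdNormalTail u :=
  setIntegral_nonneg measurableSet_Ioi (fun x _ => stmt15_phi_nonneg x)

lemma stmt15_gauss_Ici (u : ℝ) :
    gaussianReal 0 1 (Ici u) = ENNReal.ofReal (stdNormalTail u) := by
  rw [gaussianReal_apply_eq_integral 0 one_ne_zero, stmt15_phi_eq, stmt15_tail_eq_Ici]

lemma stmt15_gauss_Ioi (u : ℝ) :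
    gaussianReal 0 1 (Ioi u) = ENNReal.ofReal (stdNormalTail u) := by
  rw [gaussianReal_apply_eq_integral 0 one_ne_zero, stmt15_phi_eq]; rfl

lemma stmt15_tail_shift {t w : ℝ} (hw : 0 ≤ w) :
    stdNormalTail (t + w) ≤ Real.exp (-(t * w + w ^ 2 / 2)) * stdNormalTail t := by
  set φ : ℝ → ℝ := fun x => (Real.sqrt (2 * Real.pi))⁻¹ * Real.exp (-x ^ 2 / 2) with hφ
  have himg : (fun x => x + w) '' Ioi t = Ioi (t + w) := by
    ext x; simp only [mem_image, mem_Ioi]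
    constructor
    · rintro ⟨y, hy, rfl⟩; linarith
    · intro hx; exact ⟨x - w, by linarith, by ring⟩
  have hsub : stdNormalTail (t + w) = ∫ x in Ioi t, φ (x + w) := by
    rw [stdNormalTail, ← hφ, ← himg,
      integral_image_eq_integral_abs_deriv_smul measurableSet_Ioi
        (fun x _ => ((hasDerivAt_id' (x := x)).add_const w).hasDerivWithinAt)
        (fun x _ y _ h => by simpa using h) φ]
    simp
  rw [hsub, stmt15_tail_eq_Ici, ← hφ]
  have hInt1 : IntegrableOn (fun x => φ (x + w)) (Ioi t) :=
    (Integrable.comp_add_right stmt15_intphi w).integrableOn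
  have hInt2 : IntegrableOn (fun x => Real.exp (-(t * w + w ^ 2 / 2)) * φ x) (Ioi t) :=
    (stmt15_intphi.const_mul _).integrableOn
  have hmono : ∫ x in Ioi t, φ (x + w)
      ≤ ∫ x in Ioi t, Real.exp (-(t * w + w ^ 2 / 2)) * φ x := by
    refine setIntegral_mono_on hInt1 hInt2 measurableSet_Ioi (fun x hx => ?_)
    have hx' : t < x := hx
    have h1 : φ (x + w) = Real.exp (-(x * w + w ^ 2 / 2)) * φ x := by
      have e : -(x + w) ^ 2 / 2 = (-(x * w + w ^ 2 / 2)) + (-x ^ 2 / 2) := by ring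
      simp only [hφ]
      rw [e, Real.exp_add]; ring
    rw [h1]
    have : Real.exp (-(x * w + w ^ 2 / 2)) ≤ Real.exp (-(t * w + w ^ 2 / 2)) := by
      apply Real.exp_le_exp.2; nlinarith
    exact mul_le_mul_of_nonneg_right this (stmt15_phi_nonneg x)
  calc ∫ x in Ioi t, φ (x + w) ≤ _ := hmono
    _ = Real.exp (-(t * w + w ^ 2 / 2)) * ∫ x in Ioi t, φ x := integral_const_mul _ _
    _ = Real.exp (-(t * w + w ^ 2 / 2)) * ∫ x in Ici t, φ x := by
        rw [MeasureTheory.integral_Ici_eq_integral_Ioi]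

lemma stmt15_int_aff {ρ a : ℝ} (hρ : 0 < ρ) :
    Integrable (fun y => (Real.sqrt (2 * Real.pi))⁻¹ * Real.exp (-(a + (a - y) / ρ) ^ 2 / 2)) := by
  set φ : ℝ → ℝ := fun x => (Real.sqrt (2 * Real.pi))⁻¹ * Real.exp (-x ^ 2 / 2) with hφ
  have h2 : Integrable (fun y => φ (y - (a + a / ρ))) :=
    Integrable.comp_sub_right stmt15_intphi (a + a / ρ)
  have h3 : Integrable (fun y => φ (y * ρ⁻¹ - (a + a / ρ))) :=
    h2.comp_mul_right' (inv_ne_zero hρ.ne')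
  refine h3.congr (ae_of_all _ (fun y => ?_))
  simp only [hφ]
  have harg : (y * ρ⁻¹ - (a + a / ρ)) ^ 2 = (a + (a - y) / ρ) ^ 2 := by
    have h : y * ρ⁻¹ - (a + a / ρ) = -(a + (a - y) / ρ) := by field_simp; ring
    rw [h, neg_sq]
  rw [harg]

lemma stmt15_sub_int {ρ a : ℝ} (hρ : 0 < ρ) :
    ∫ y in Iic a, (Real.sqrt (2 * Real.pi))⁻¹ * Real.exp (-(a + (a - y) / ρ) ^ 2 / 2)
      = ρ * stdNormalTail a := by
  set φ : ℝ → ℝ := fun x => (Real.sqrt (2 * Real.pi))⁻¹ * Real.exp (-x ^ 2 / 2) with hφ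
  have hd : ∀ x : ℝ, HasDerivAt (fun v => a - ρ * v) (-ρ) x := fun x => by
    simpa using ((hasDerivAt_id' (x := x)).const_mul ρ).const_sub a
  have hinj : InjOn (fun v => a - ρ * v) (Ici 0) :=
    fun x _ y _ h => mul_left_cancel₀ hρ.ne' (by dsimp at h; linarith : ρ * x = ρ * y)
  have himg : (fun v => a - ρ * v) '' Ici 0 = Iic a := by
    ext y; simp only [mem_image, mem_Ici, mem_Iic]
    constructor
    · rintro ⟨v, hv, rfl⟩; nlinarith
    · intro hy; exact ⟨(a - y) / ρ, div_nonneg (by linarith) hρ.le, by field_simp; ring⟩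
  have key : ∫ y in Iic a, φ (a + (a - y) / ρ)
      = ∫ v in Ici 0, |(-ρ)| • φ (a + (a - (a - ρ * v)) / ρ) := by
    rw [← himg]
    exact integral_image_eq_integral_abs_deriv_smul (f' := fun _ => -ρ) measurableSet_Ici
      (fun x _ => (hd x).hasDerivWithinAt) hinj (fun y => φ (a + (a - y) / ρ))
  have himg2 : (fun v => v + a) '' Ici 0 = Ici a := by
    ext y; simp only [mem_image, mem_Ici]
    constructor
    · rintro ⟨v, hv, rfl⟩; linarith
    · intro hy; exact ⟨y - a, by linarith, by ring⟩
  have key2 : ∫ x in Ici a, φ x = ∫ v in Ici 0, φ (v + a) := by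
    rw [← himg2, integral_image_eq_integral_abs_deriv_smul (f' := fun _ => (1:ℝ))
      measurableSet_Ici
      (fun x _ => ((hasDerivAt_id' (x := x)).add_const a).hasDerivWithinAt)
      (fun x _ y _ h => by simpa using h) φ]
    simp
  calc ∫ y in Iic a, φ (a + (a - y) / ρ)
      = ∫ v in Ici 0, |(-ρ)| • φ (a + (a - (a - ρ * v)) / ρ) := key
    _ = ∫ v in Ici 0, ρ * φ (v + a) := by
        refine setIntegral_congr_fun measurableSet_Ici (fun v _ => ?_)
        have h1 : (a - (a - ρ * v)) / ρ = v := by field_simp; ring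
        rw [h1, abs_neg, abs_of_pos hρ, smul_eq_mul, add_comm]
    _ = ρ * ∫ v in Ici 0, φ (v + a) := integral_const_mul _ _
    _ = ρ * stdNormalTail a := by rw [← key2, stmt15_tail_eq_Ici]

set_option maxHeartbeats 1000000 in
lemma stmt15_Iic_bound {t ρ c a : ℝ} (hρpos : 0 < ρ) (hc : 0 < c)
    (hc2 : c ^ 2 = 1 - ρ ^ 2) (hadef : a = (1 - ρ) * t / c) (hca : c * a = (1 - ρ) * t) :
    ∫⁻ y in Iic a, ENNReal.ofReal (stdNormalTail (max t ((t - c * y) / ρ)))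
        ∂(gaussianReal 0 1)
      ≤ ENNReal.ofReal (stdNormalTail t * (ρ * stdNormalTail a)) := by
  have hmeasg : Measurable (fun y : ℝ => ENNReal.ofReal
      (Real.exp (-(t * (c * (a - y) / ρ) + (c * (a - y) / ρ) ^ 2 / 2)) * stdNormalTail t)) := by
    refine Measurable.ennreal_ofReal (Continuous.measurable ?_)
    fun_prop
  have step1 : ∀ y ∈ Iic a, ENNReal.ofReal (stdNormalTail (max t ((t - c * y) / ρ)))
      ≤ ENNReal.ofReal
        (Real.exp (-(t * (c * (a - y) / ρ) + (c * (a - y) / ρ) ^ 2 / 2)) * stdNormalTail t) := by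
    intro y hy
    have hy' : y ≤ a := hy
    have hw : 0 ≤ c * (a - y) / ρ :=
      div_nonneg (mul_nonneg hc.le (by linarith)) hρpos.le
    have harg : (t - c * y) / ρ = t + c * (a - y) / ρ := by
      field_simp
      nlinarith [hca]
    have hmax : max t ((t - c * y) / ρ) = t + c * (a - y) / ρ := by
      rw [harg]; exact max_eq_right (by linarith)
    rw [hmax]
    exact ENNReal.ofReal_le_ofReal (stmt15_tail_shift hw)
  calc ∫⁻ y in Iic a, ENNReal.ofReal (stdNormalTail (max t ((t - c * y) / ρ)))
          ∂(gaussianReal 0 1)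
      ≤ ∫⁻ y in Iic a, ENNReal.ofReal
          (Real.exp (-(t * (c * (a - y) / ρ) + (c * (a - y) / ρ) ^ 2 / 2))
            * stdNormalTail t) ∂(gaussianReal 0 1) := setLIntegral_mono hmeasg step1
    _ = ∫⁻ y in Iic a, ENNReal.ofReal (stdNormalTail t
          * ((Real.sqrt (2 * Real.pi))⁻¹ * Real.exp (-(a + (a - y) / ρ) ^ 2 / 2))) := by
        rw [gaussianReal_of_var_ne_zero 0 one_ne_zero,
          restrict_withDensity measurableSet_Iic,
          lintegral_withDensity_eq_lintegral_mul _ (measurable_gaussianPDF 0 1) hmeasg]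
        refine setLIntegral_congr_fun measurableSet_Iic (fun y _ => ?_)
        simp only [Pi.mul_apply]
        rw [gaussianPDF_def, stmt15_phi_eq, ← ENNReal.ofReal_mul (stmt15_phi_nonneg y)]
        congr 1
        have hexp : -y ^ 2 / 2 + -(t * (c * (a - y) / ρ) + (c * (a - y) / ρ) ^ 2 / 2)
            = -(a + (a - y) / ρ) ^ 2 / 2 := by
          rw [hadef]
          field_simp
          linear_combination (-c^2*y^2 + 2*c*y*t - t^2*(1-ρ^2)) * hc2
        calc (Real.sqrt (2 * Real.pi))⁻¹ * Real.exp (-y ^ 2 / 2)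
            * (Real.exp (-(t * (c * (a - y) / ρ) + (c * (a - y) / ρ) ^ 2 / 2))
              * stdNormalTail t)
            = stdNormalTail t * ((Real.sqrt (2 * Real.pi))⁻¹
              * (Real.exp (-y ^ 2 / 2)
                * Real.exp (-(t * (c * (a - y) / ρ) + (c * (a - y) / ρ) ^ 2 / 2)))) := by ring
          _ = _ := by rw [← Real.exp_add, hexp]
    _ = ENNReal.ofReal (∫ y in Iic a, stdNormalTail t
          * ((Real.sqrt (2 * Real.pi))⁻¹ * Real.exp (-(a + (a - y) / ρ) ^ 2 / 2))) := by
        rw [← ofReal_integral_eq_lintegral_ofReal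
          (((stmt15_int_aff hρpos).const_mul (stdNormalTail t)).integrableOn)
          (ae_of_all _ (fun y => mul_nonneg (stmt15_tail_nonneg t) (stmt15_phi_nonneg _)))]
    _ = ENNReal.ofReal (stdNormalTail t * (ρ * stdNormalTail a)) := by
        rw [integral_const_mul, stmt15_sub_int hρpos]

/-- Let `(ζ, ζ')` be jointly Gaussian standard normal with correlation
`ρ ∈ [0, 1)` (realized as `ζ' = ρ ζ + √(1−ρ²) ζ₂` with `ζ, ζ₂` independent standard
normals). Then for every `t > 0`,
`P(ζ ≥ t, ζ' ≥ t) ≤ (1+ρ) · G(t) · G((1−ρ) t / √(1−ρ²))`. -/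
theorem stmt15 {Ω : Type*} [MeasurableSpace Ω] (μ : Measure Ω) [IsProbabilityMeasure μ]
    (ζ ζ₂ : Ω → ℝ) (hζm : Measurable ζ) (hζ₂m : Measurable ζ₂)
    (hindep : IndepFun ζ ζ₂ μ)
    (hζlaw : Measure.map ζ μ = gaussianReal 0 1)
    (hζ₂law : Measure.map ζ₂ μ = gaussianReal 0 1)
    (ρ : ℝ) (hρ₁ : 0 ≤ ρ) (hρ₂ : ρ < 1)
    (ζ' : Ω → ℝ) (hζ' : ∀ ω, ζ' ω = ρ * ζ ω + Real.sqrt (1 - ρ ^ 2) * ζ₂ ω) :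
    ∀ t : ℝ, 0 < t →
      μ {ω | t ≤ ζ ω ∧ t ≤ ζ' ω}
        ≤ ENNReal.ofReal ((1 + ρ) * stdNormalTail t
            * stdNormalTail ((1 - ρ) * t / Real.sqrt (1 - ρ ^ 2))) := by
  intro t ht
  set c := Real.sqrt (1 - ρ ^ 2) with hcdef
  have hρ2 : ρ ^ 2 < 1 := by nlinarith
  have hc : 0 < c := Real.sqrt_pos.2 (by linarith)
  have hc2 : c ^ 2 = 1 - ρ ^ 2 := Real.sq_sqrt (by linarith)
  set γ := gaussianReal 0 1 with hγ
  have hpair : Measure.map (fun ω => (ζ₂ ω, ζ ω)) μ = γ.prod γ := by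
    have h := (indepFun_iff_map_prod_eq_prod_map_map hζ₂m.aemeasurable
      hζm.aemeasurable).mp hindep.symm
    rw [h, hζlaw, hζ₂law]
  set D : Set (ℝ × ℝ) := {p | t ≤ p.2 ∧ t ≤ ρ * p.2 + c * p.1} with hD
  have hDm : MeasurableSet D := by
    have : D = {p : ℝ × ℝ | t ≤ p.2} ∩ {p : ℝ × ℝ | t ≤ ρ * p.2 + c * p.1} := rfl
    rw [this]
    exact (measurableSet_le measurable_const measurable_snd).inter
      (measurableSet_le measurable_const
        ((measurable_snd.const_mul ρ).add (measurable_fst.const_mul c)))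
  have hsets : {ω | t ≤ ζ ω ∧ t ≤ ζ' ω} = (fun ω => (ζ₂ ω, ζ ω)) ⁻¹' D := by
    ext ω; simp [hD, hζ' ω]
  have hμD : μ {ω | t ≤ ζ ω ∧ t ≤ ζ' ω} = (γ.prod γ) D := by
    rw [hsets, ← hpair, Measure.map_apply (hζ₂m.prodMk hζm) hDm]
  rw [hμD]
  rcases eq_or_lt_of_le hρ₁ with hρ0 | hρpos
  · -- case ρ = 0
    have hc1 : c = 1 := by rw [hcdef, ← hρ0]; norm_num
    have hDeq : D = Ici t ×ˢ Ici t := by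
      ext p
      simp only [hD, mem_setOf_eq, mem_prod, mem_Ici, ← hρ0, hc1, zero_mul, one_mul, zero_add]
      exact and_comm
    rw [hDeq, Measure.prod_prod, hγ, stmt15_gauss_Ici,
      ← ENNReal.ofReal_mul (stmt15_tail_nonneg t)]
    apply le_of_eq
    congr 1
    rw [← hρ0, hc1]
    norm_num
  · -- case ρ > 0
    set a := (1 - ρ) * t / c with hadef
    have hca : c * a = (1 - ρ) * t := by
      rw [hadef]; field_simp
    have hsec : ∀ y : ℝ, (Prod.mk y ⁻¹' D) = Ici (max t ((t - c * y) / ρ)) := by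
      intro y; ext x
      simp only [hD, mem_preimage, mem_setOf_eq, mem_Ici, max_le_iff, div_le_iff₀ hρpos]
      constructor <;> rintro ⟨h1, h2⟩ <;> exact ⟨h1, by linarith⟩
    have happ : (γ.prod γ) D
        = ∫⁻ y, ENNReal.ofReal (stdNormalTail (max t ((t - c * y) / ρ))) ∂γ := by
      rw [Measure.prod_apply hDm]
      refine lintegral_congr (fun y => ?_)
      rw [hsec y, hγ, stmt15_gauss_Ici]
    rw [happ, ← lintegral_add_compl _ (measurableSet_Iic (a := a)), compl_Iic]
    have hIoi : ∫⁻ y in Ioi a, ENNReal.ofReal (stdNormalTail (max t ((t - c * y) / ρ))) ∂γ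
        = ENNReal.ofReal (stdNormalTail t * stdNormalTail a) := by
      have hpt : ∀ y ∈ Ioi a, ENNReal.ofReal (stdNormalTail (max t ((t - c * y) / ρ)))
          = ENNReal.ofReal (stdNormalTail t) := by
        intro y hy
        have hy' : a < y := hy
        have h1 : (t - c * y) / ρ ≤ t := by
          rw [div_le_iff₀ hρpos]
          have h2 : c * a ≤ c * y := mul_le_mul_of_nonneg_left hy'.le hc.le
          rw [hca] at h2; nlinarith
        rw [max_eq_left h1]
      rw [setLIntegral_congr_fun measurableSet_Ioi hpt, setLIntegral_const,
        hγ, stmt15_gauss_Ioi, ← ENNReal.ofReal_mul (stmt15_tail_nonneg t)]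
    have hIic : ∫⁻ y in Iic a, ENNReal.ofReal (stdNormalTail (max t ((t - c * y) / ρ))) ∂γ
        ≤ ENNReal.ofReal (stdNormalTail t * (ρ * stdNormalTail a)) := by
      rw [hγ]
      exact stmt15_Iic_bound hρpos hc hc2 hadef hca
    calc (∫⁻ y in Iic a, ENNReal.ofReal (stdNormalTail (max t ((t - c * y) / ρ))) ∂γ)
          + ∫⁻ y in Ioi a, ENNReal.ofReal (stdNormalTail (max t ((t - c * y) / ρ))) ∂γ
        ≤ ENNReal.ofReal (stdNormalTail t * (ρ * stdNormalTail a))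
          + ENNReal.ofReal (stdNormalTail t * stdNormalTail a) :=
          add_le_add hIic (le_of_eq hIoi)
      _ = ENNReal.ofReal ((1 + ρ) * stdNormalTail t * stdNormalTail a) := by
          rw [← ENNReal.ofReal_add
            (mul_nonneg (stmt15_tail_nonneg t) (mul_nonneg hρpos.le (stmt15_tail_nonneg a)))
            (mul_nonneg (stmt15_tail_nonneg t) (stmt15_tail_nonneg a))]
          congr 1
          ring
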